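/- In the flat two-dimensional torus T² = ℝ²/ℤ², the union of the n−d+2 closed geodesics given by x₂ = 0, x₂ = k·x₁ + 1/2, and x₁ = c_j for j = 1, ..., n−d (where k ≥ 0 is an integer and each k·c_j + 1/2 is not an integer) divides the torus into exactly 2(n−d) + k connected components. -/

import Mathlib

/-- The flat `d`-dimensional torus `ℝ^d / ℤ^d`. -/
abbrev Torus (d : ℕ) : Type := Fin d → AddCircle (1 : ℝ)

/-- The quotient map `ℝ^d → ℝ^d/ℤ^d`. -/
noncomputable def torusQuot (d : ℕ) : (Fin d → ℝ) → Torus d := fun x i => (x i : AddCircle (1 : ℝ))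

/-- A codimension-one subtorus of the flat torus: the image of an affine hyperplane
`∑ aᵢ xᵢ = c` with rational coefficients `a ≠ 0`. -/
def IsCodimOneSubtorus {d : ℕ} (S : Set (Torus d)) : Prop :=
  ∃ (a : Fin d → ℚ) (c : ℝ), a ≠ 0 ∧
    S = torusQuot d '' {x : Fin d → ℝ | ∑ i, (a i : ℝ) * x i = c}

/-- The number of connected components of the complement of `A` in the torus. -/
noncomputable def torusRegions {d : ℕ} (A : Set (Torus d)) : ℕ :=
  Nat.card (ConnectedComponents ↥(Aᶜ))

/-- `F(T^d, n)`: the set of possible numbers of connected components of complements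
of unions of `n` distinct codimension-one subtori of the flat `d`-torus. -/
def FTorus (d n : ℕ) : Set ℕ :=
  {f | ∃ 𝒜 : Finset (Set (Torus d)), 𝒜.card = n ∧ (∀ S ∈ 𝒜, IsCodimOneSubtorus S) ∧
        f = torusRegions (⋃ S ∈ 𝒜, S)}

open Set Topology

lemma card_connectedComponents_of_partition {X ι : Type*} [TopologicalSpace X]
    (U : ι → Set X) (ho : ∀ i, IsOpen (U i))
    (hconn : ∀ i, IsConnected (U i))
    (hdisj : Pairwise (Function.onFun Disjoint U))
    (hcover : ⋃ i, U i = Set.univ) :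
    Nat.card (ConnectedComponents X) = Nat.card ι := by
  have hcompl : ∀ i, (U i)ᶜ = ⋃ j ∈ ({i}ᶜ : Set ι), U j := by
    intro i
    ext x
    simp only [mem_compl_iff, mem_iUnion, mem_singleton_iff, exists_prop]
    constructor
    · intro hx
      have : x ∈ ⋃ j, U j := hcover ▸ mem_univ x
      obtain ⟨j, hj⟩ := mem_iUnion.1 this
      exact ⟨j, fun h => hx (h ▸ hj), hj⟩
    · rintro ⟨j, hji, hj⟩ hxi
      exact Set.disjoint_left.1 (hdisj (Ne.symm hji)) hxi hj
  have hclopen : ∀ i, IsClopen (U i) := by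
    intro i
    refine ⟨⟨?_⟩, ho i⟩
    rw [hcompl i]
    exact isOpen_biUnion fun j _ => ho j
  have hcomp : ∀ i, ∀ x ∈ U i, connectedComponent x = U i := fun i x hx =>
    subset_antisymm ((hclopen i).connectedComponent_subset hx)
      ((hconn i).isPreconnected.subset_connectedComponent hx)
  choose p hp using fun i => (hconn i).nonempty
  have hbij : Function.Bijective (fun i => (ConnectedComponents.mk (p i))) := by
    constructor
    · intro i j hij
      rw [ConnectedComponents.coe_eq_coe] at hij
      rw [hcomp i _ (hp i), hcomp j _ (hp j)] at hij
      by_contra hne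
      exact Set.disjoint_left.1 (hdisj hne) (hp i) (show p i ∈ U j by rw [← hij]; exact hp i)
    · intro q
      obtain ⟨x, rfl⟩ := ConnectedComponents.surjective_coe q
      have : x ∈ ⋃ i, U i := hcover ▸ mem_univ x
      obtain ⟨i, hi⟩ := mem_iUnion.1 this
      exact ⟨i, ConnectedComponents.coe_eq_coe.2 (by rw [hcomp i _ (hp i), hcomp i _ hi])⟩
  exact (Nat.card_congr (Equiv.ofBijective _ hbij)).symm

lemma addCircle_coe_eq_coe_iff {x y : ℝ} :
    (x : AddCircle (1:ℝ)) = (y : AddCircle (1:ℝ)) ↔ ∃ z : ℤ, y = x + z := by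
  rw [QuotientAddGroup.eq_iff_sub_mem]
  constructor
  · rintro h
    obtain ⟨z, hz⟩ := AddSubgroup.mem_zmultiples_iff.1 h
    refine ⟨-z, ?_⟩
    have : (z:ℝ) = x - y := by simpa using hz
    push_cast
    linarith
  · rintro ⟨z, rfl⟩
    refine AddSubgroup.mem_zmultiples_iff.2 ⟨-z, by simp⟩

lemma addCircle_exists_rep_Ico (a : ℝ) (y : AddCircle (1:ℝ)) :
    ∃ x : ℝ, x ∈ Set.Ico a (a+1) ∧ (x : AddCircle (1:ℝ)) = y := by
  induction y using QuotientAddGroup.induction_on with | H r =>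
  refine ⟨toIcoMod one_pos a r, toIcoMod_mem_Ico one_pos a r, ?_⟩
  rw [QuotientAddGroup.eq_iff_sub_mem, toIcoMod_sub_self]
  exact AddSubgroup.zsmul_mem_zmultiples _ _

lemma addCircle_nsmul_coe (k : ℕ) (x : ℝ) :
    k • ((x : AddCircle (1:ℝ))) = (((k : ℝ) * x : ℝ) : AddCircle (1:ℝ)) := by
  rw [← nsmul_eq_mul]
  exact (map_nsmul (QuotientAddGroup.mk' (AddSubgroup.zmultiples (1:ℝ))) k x).symm

lemma addCircle_coe_eq_zero_iff {x : ℝ} :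
    (x : AddCircle (1:ℝ)) = 0 ↔ ∃ z : ℤ, x = (z : ℝ) := by
  rw [AddCircle.coe_eq_zero_iff]
  constructor
  · rintro ⟨n, hn⟩; exact ⟨n, by simpa using hn.symm⟩
  · rintro ⟨n, rfl⟩; exact ⟨n, by simp⟩

section Strips
variable {m : ℕ}

/-- right end of strip `i`. -/
noncomputable def stripEnd (hm : 0 < m) (t : Fin m → ℝ) (i : Fin m) : ℝ :=
  if h : (i : ℕ) + 1 < m then t ⟨i + 1, h⟩ else t ⟨0, hm⟩ + 1

lemma stripEnd_gt {hm : 0 < m} {t : Fin m → ℝ} (hmono : StrictMono t)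
    (h0 : ∀ i, 0 ≤ t i) (h1 : ∀ i, t i < 1) (i : Fin m) : t i < stripEnd hm t i := by
  unfold stripEnd
  split_ifs with h
  · exact hmono (by simp [Fin.lt_def])
  · have := h1 i
    have := h0 ⟨0, hm⟩
    linarith

lemma t_ge_t0 {hm : 0 < m} {t : Fin m → ℝ} (hmono : StrictMono t) (i : Fin m) :
    t ⟨0, hm⟩ ≤ t i :=
  hmono.monotone (by simp [Fin.le_def])

lemma stripEnd_le {hm : 0 < m} {t : Fin m → ℝ}
    (h0 : ∀ i, 0 ≤ t i) (h1 : ∀ i, t i < 1) (i : Fin m) :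
    stripEnd hm t i ≤ t ⟨0, hm⟩ + 1 := by
  unfold stripEnd
  split_ifs with h
  · have := h1 (⟨i + 1, h⟩ : Fin m)
    have := h0 ⟨0, hm⟩
    linarith
  · exact le_refl _

/-- strips are ordered -/
lemma stripEnd_le_t {hm : 0 < m} {t : Fin m → ℝ} (hmono : StrictMono t)
    {i i' : Fin m} (hii : i < i') : stripEnd hm t i ≤ t i' := by
  unfold stripEnd
  split_ifs with h
  · exact hmono.monotone (by simp [Fin.le_def]; omega)
  · exact absurd (lt_of_le_of_lt (Nat.succ_le_of_lt hii) i'.isLt) h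

/-- no translate of any `t l` lies in the open strip -/
lemma t_notMem_strip {hm : 0 < m} {t : Fin m → ℝ} (hmono : StrictMono t)
    (h0 : ∀ i, 0 ≤ t i) (h1 : ∀ i, t i < 1) (i l : Fin m) (w : ℤ) :
    t l + w ∉ Ioo (t i) (stripEnd hm t i) := by
  rintro ⟨hlt, hgt⟩
  have hb := stripEnd_le (hm := hm) h0 h1 i
  have ha := t_ge_t0 (hm := hm) hmono i
  have h0' := h0 ⟨0, hm⟩
  have h1l := h1 l
  have h0l := h0 l
  have ht0l := t_ge_t0 (hm := hm) hmono l
  have hw0 : w = 0 := by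
    have hww1 : (-1 : ℝ) < (w : ℝ) := by linarith
    have hww2 : (w : ℝ) < 1 := by linarith
    have g1 : (-1 : ℤ) < w := by exact_mod_cast hww1
    have g2 : w < 1 := by exact_mod_cast hww2
    omega
  subst hw0
  simp only [Int.cast_zero, add_zero] at hlt hgt
  have hil : i < l := by
    by_contra hle
    exact absurd hlt (not_lt.2 (hmono.monotone (not_lt.1 hle)))
  exact absurd hgt (not_lt.2 (stripEnd_le_t hmono hil))

end Strips

section
variable {m : ℕ}

lemma strip_count (k : ℕ) (hm : 0 < m) (t : Fin m → ℝ) (hmono : StrictMono t)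
    (h0 : ∀ i, 0 ≤ t i) (h1 : ∀ i, t i < 1) :
    ∑ i : Fin m, (⌈(k:ℝ) * stripEnd hm t i + 1/2⌉ + 1 - (⌈(k:ℝ) * t i + 1/2⌉ - 1)).toNat
      = 2 * m + k := by
  set A : ℕ → ℤ := fun j =>
    if h : j < m then ⌈(k:ℝ) * t ⟨j, h⟩ + 1/2⌉ else ⌈(k:ℝ) * t ⟨0, hm⟩ + 1/2⌉ + k with hA
  have hA0 : A 0 = ⌈(k:ℝ) * t ⟨0, hm⟩ + 1/2⌉ := by simp [hA, hm]
  have hAm : A m = ⌈(k:ℝ) * t ⟨0, hm⟩ + 1/2⌉ + k := by simp [hA]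
  have hAi : ∀ i : Fin m, A (i : ℕ) = ⌈(k:ℝ) * t i + 1/2⌉ := by
    intro i; simp [hA, i.isLt]
  have hAsucc : ∀ i : Fin m, A ((i : ℕ) + 1) = ⌈(k:ℝ) * stripEnd hm t i + 1/2⌉ := by
    intro i
    by_cases h : (i : ℕ) + 1 < m
    · simp [hA, h, stripEnd, dif_pos h]
    · have hkeq : (k:ℝ) * (t ⟨0, hm⟩ + 1) + 1/2 = ((k:ℝ) * t ⟨0, hm⟩ + 1/2) + (k : ℕ) := by
        push_cast; ring
      simp only [hA, stripEnd, dif_neg h, hkeq, Int.ceil_add_natCast]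
  have hmonoA : ∀ i : Fin m, A (i : ℕ) ≤ A ((i : ℕ) + 1) := by
    intro i
    rw [hAi, hAsucc]
    apply Int.ceil_le_ceil
    have := stripEnd_gt (hm := hm) hmono h0 h1 i
    nlinarith [Nat.cast_nonneg (α := ℝ) k]
  have key : ∀ i : Fin m,
      ((⌈(k:ℝ) * stripEnd hm t i + 1/2⌉ + 1 - (⌈(k:ℝ) * t i + 1/2⌉ - 1)).toNat : ℤ)
        = A ((i : ℕ) + 1) - A (i : ℕ) + 2 := by
    intro i
    rw [Int.toNat_of_nonneg (by rw [← hAi, ← hAsucc]; have := hmonoA i; omega)]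
    rw [← hAi, ← hAsucc]; ring
  have : ((∑ i : Fin m, (⌈(k:ℝ) * stripEnd hm t i + 1/2⌉ + 1
      - (⌈(k:ℝ) * t i + 1/2⌉ - 1)).toNat : ℕ) : ℤ) = 2 * m + k := by
    push_cast [key]
    rw [Fin.sum_univ_eq_sum_range (fun j => A (j + 1) - A j + 2)]
    rw [Finset.sum_add_distrib, Finset.sum_range_sub]
    simp [hAm, hA0]
    ring
  exact_mod_cast this
end

/-- open region in `ℝ²`: strip `a < x₀ < b`, `0 < x₁ < 1`, between consecutive translates
of the line `x₁ = k x₀ + 1/2 - z`. -/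
def stripV (k : ℕ) (a b : ℝ) (z : ℤ) : Set (Fin 2 → ℝ) :=
  ((fun x : Fin 2 → ℝ => x 0) ⁻¹' Ioo a b) ∩
    ((fun x : Fin 2 → ℝ => x 1) ⁻¹' Ioo (0:ℝ) 1) ∩
    ((fun x : Fin 2 → ℝ => x 1 - (k:ℝ) * x 0) ⁻¹' Ioo (1/2 - z) (3/2 - z))

lemma stripV_isOpen (k : ℕ) (a b : ℝ) (z : ℤ) : IsOpen (stripV k a b z) := by
  unfold stripV
  refine (IsOpen.inter (IsOpen.inter ?_ ?_) ?_)
  · exact isOpen_Ioo.preimage (continuous_apply 0)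
  · exact isOpen_Ioo.preimage (continuous_apply 1)
  · exact isOpen_Ioo.preimage ((continuous_apply 1).sub (continuous_const.mul (continuous_apply 0)))

lemma stripV_convex (k : ℕ) (a b : ℝ) (z : ℤ) : Convex ℝ (stripV k a b z) := by
  unfold stripV
  refine (Convex.inter (Convex.inter ?_ ?_) ?_)
  · exact (convex_Ioo a b).linear_preimage (LinearMap.proj (R := ℝ) (φ := fun _ : Fin 2 => ℝ) 0)
  · exact (convex_Ioo (0:ℝ) 1).linear_preimage (LinearMap.proj (R := ℝ) (φ := fun _ : Fin 2 => ℝ) 1)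
  · exact (convex_Ioo (1/2 - (z:ℝ)) (3/2 - z)).linear_preimage
      (LinearMap.proj (R := ℝ) (φ := fun _ : Fin 2 => ℝ) 1
        - (k:ℝ) • LinearMap.proj (R := ℝ) (φ := fun _ : Fin 2 => ℝ) 0)

lemma stripV_nonempty (k : ℕ) (a b : ℝ) (z : ℤ) (hab : a < b)
    (ha : ∀ w : ℤ, (k:ℝ) * a + 1/2 ≠ w)
    (hzlo : ⌈(k:ℝ) * a + 1/2⌉ - 1 ≤ z) (hzhi : z ≤ ⌈(k:ℝ) * b + 1/2⌉) :
    (stripV k a b z).Nonempty := by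
  have hga : (k:ℝ) * a + 1/2 < (z:ℝ) + 1 := by
    have h1 : (k:ℝ) * a + 1/2 ≤ (⌈(k:ℝ) * a + 1/2⌉ : ℝ) := Int.le_ceil _
    have h2 : (k:ℝ) * a + 1/2 ≠ (⌈(k:ℝ) * a + 1/2⌉ : ℝ) := ha _
    have h3 : ((⌈(k:ℝ) * a + 1/2⌉ : ℤ) : ℝ) ≤ (z : ℝ) + 1 := by
      exact_mod_cast (by omega : ⌈(k:ℝ) * a + 1/2⌉ ≤ z + 1)
    linarith [lt_of_le_of_ne h1 h2]
  have hgb : (z : ℝ) - 1 < (k:ℝ) * b + 1/2 := by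
    have h1 := Int.ceil_lt_add_one ((k:ℝ) * b + 1/2)
    have h2 : (z:ℝ) ≤ (⌈(k:ℝ) * b + 1/2⌉ : ℝ) := by exact_mod_cast hzhi
    linarith
  obtain ⟨x₀, hx₀ab, hx₀g⟩ :
      ∃ x₀, x₀ ∈ Ioo a b ∧ ((k:ℝ) * x₀ + 1/2 - z) ∈ Ioo (-1 : ℝ) 1 := by
    rcases Nat.eq_zero_or_pos k with hk | hk
    · subst hk
      refine ⟨(a + b)/2, ⟨by linarith, by linarith⟩, ?_⟩
      constructor
      · push_cast at hgb ⊢; linarith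
      · push_cast at hga ⊢; linarith
    · have hkpos : (0:ℝ) < k := by exact_mod_cast hk
      obtain ⟨x₀, hx₀⟩ := nonempty_Ioo.2 (show max a (((z:ℝ) - 3/2) / k) <
          min b (((z:ℝ) + 1/2) / k) by
        apply max_lt <;> [skip; skip] <;> apply lt_min
        · exact hab
        · rw [lt_div_iff₀ hkpos]; linarith
        · rw [div_lt_iff₀ hkpos]; linarith
        · rw [div_lt_div_iff₀ hkpos hkpos]; nlinarith)
      refine ⟨x₀, ⟨lt_of_le_of_lt (le_max_left _ _) hx₀.1,
        lt_of_lt_of_le hx₀.2 (min_le_left _ _)⟩, ?_, ?_⟩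
      · have : ((z:ℝ) - 3/2) / k < x₀ := lt_of_le_of_lt (le_max_right _ _) hx₀.1
        rw [div_lt_iff₀ hkpos] at this; nlinarith
      · have : x₀ < ((z:ℝ) + 1/2) / k := lt_of_lt_of_le hx₀.2 (min_le_right _ _)
        rw [lt_div_iff₀ hkpos] at this; nlinarith
  obtain ⟨hu1, hu2⟩ := hx₀g
  have hu : ∃ u : ℝ, u = (k:ℝ) * x₀ + 1/2 - z := ⟨_, rfl⟩
  obtain ⟨u, hu⟩ := hu
  rw [← hu] at hu1 hu2
  obtain ⟨x₁, hx₁⟩ := nonempty_Ioo.2 (show max 0 u < min 1 (u + 1) by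
    apply max_lt <;> apply lt_min <;> linarith)
  have hx₁0 : 0 < x₁ := lt_of_le_of_lt (le_max_left _ _) hx₁.1
  have hx₁u : u < x₁ := lt_of_le_of_lt (le_max_right _ _) hx₁.1
  have hx₁1 : x₁ < 1 := lt_of_lt_of_le hx₁.2 (min_le_left _ _)
  have hx₁u1 : x₁ < u + 1 := lt_of_lt_of_le hx₁.2 (min_le_right _ _)
  refine ⟨![x₀, x₁], ⟨⟨?_, ?_⟩, ?_⟩⟩
  · simpa using hx₀ab
  · simpa using ⟨hx₁0, hx₁1⟩
  · simp only [mem_preimage, Matrix.cons_val_one, Matrix.head_cons, Matrix.cons_val_zero,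
      mem_Ioo]
    constructor <;> [linarith [hx₁u, hu.ge, hu.le]; linarith [hx₁u1, hu.ge, hu.le]]

lemma stripV_image_mem_compl {m : ℕ} (k : ℕ) (hm : 0 < m) {t : Fin m → ℝ}
    (hmono : StrictMono t) (h0 : ∀ i, 0 ≤ t i) (h1 : ∀ i, t i < 1)
    (i : Fin m) (z : ℤ) (x : Fin 2 → ℝ) (hx : x ∈ stripV k (t i) (stripEnd hm t i) z) :
    torusQuot 2 x 1 ≠ 0 ∧
      torusQuot 2 x 1 ≠ k • torusQuot 2 x 0 + (((1:ℝ)/2 : ℝ) : AddCircle (1:ℝ)) ∧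
      ∀ l, torusQuot 2 x 0 ≠ ((t l : ℝ) : AddCircle (1:ℝ)) := by
  obtain ⟨⟨hx0, hx1⟩, hx2⟩ := hx
  simp only [Set.mem_preimage, Set.mem_Ioo] at hx0 hx1 hx2
  have hq0 : torusQuot 2 x 0 = ((x 0 : ℝ) : AddCircle (1:ℝ)) := rfl
  have hq1 : torusQuot 2 x 1 = ((x 1 : ℝ) : AddCircle (1:ℝ)) := rfl
  refine ⟨?_, ?_, ?_⟩
  · rw [hq1]
    intro hcz
    obtain ⟨w, hw⟩ := addCircle_coe_eq_zero_iff.1 hcz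
    have hw1 : (0:ℝ) < w := hw ▸ hx1.1
    have hw2 : (w:ℝ) < 1 := hw ▸ hx1.2
    have : (0:ℤ) < w := by exact_mod_cast hw1
    have : w < 1 := by exact_mod_cast hw2
    omega
  · rw [hq0, hq1, addCircle_nsmul_coe]
    intro h
    rw [show ((((k:ℝ) * x 0 : ℝ)) : AddCircle (1:ℝ)) + (((1:ℝ)/2 : ℝ) : AddCircle (1:ℝ))
        = ((((k:ℝ) * x 0 + 1/2 : ℝ)) : AddCircle (1:ℝ)) from (AddCircle.coe_add (1:ℝ) ((k:ℝ) * x 0) ((1:ℝ)/2)).symm,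
      addCircle_coe_eq_coe_iff] at h
    obtain ⟨w, hw⟩ := h
    have hw1 : (z:ℝ) - 1 < w := by
      have := hx2.2; push_cast at this ⊢; linarith
    have hw2 : (w:ℝ) < z := by
      have := hx2.1; push_cast at this ⊢; linarith
    have g1 : z - 1 < w := by exact_mod_cast hw1
    have g2 : w < z := by exact_mod_cast hw2
    omega
  · intro l h
    rw [hq0, addCircle_coe_eq_coe_iff] at h
    obtain ⟨w, hw⟩ := h
    refine t_notMem_strip (hm := hm) hmono h0 h1 i l (-w) ?_
    push_cast
    constructor <;> [linarith [hx0.1]; linarith [hx0.2]]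

lemma disjoint_core {m : ℕ} (k : ℕ) (hm : 0 < m) {t : Fin m → ℝ}
    (hmono : StrictMono t) (h0 : ∀ i, 0 ≤ t i) (h1 : ∀ i, t i < 1)
    (i i' : Fin m) (z z' : ℤ) (x x' : Fin 2 → ℝ)
    (hx : x ∈ stripV k (t i) (stripEnd hm t i) z)
    (hx' : x' ∈ stripV k (t i') (stripEnd hm t i') z')
    (hq : torusQuot 2 x = torusQuot 2 x') : i = i' ∧ z = z' := by
  obtain ⟨⟨hx0, hx1⟩, hx2⟩ := hx
  obtain ⟨⟨hx0', hx1'⟩, hx2'⟩ := hx'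
  simp only [Set.mem_preimage, Set.mem_Ioo] at hx0 hx1 hx2 hx0' hx1' hx2'
  have hq0 : ((x 0 : ℝ) : AddCircle (1:ℝ)) = ((x' 0 : ℝ) : AddCircle (1:ℝ)) := congrFun hq 0
  have hq1 : ((x 1 : ℝ) : AddCircle (1:ℝ)) = ((x' 1 : ℝ) : AddCircle (1:ℝ)) := congrFun hq 1
  rw [addCircle_coe_eq_coe_iff] at hq0 hq1
  obtain ⟨p, hp⟩ := hq0
  obtain ⟨q, hqq⟩ := hq1
  -- bounds to force p = 0, q = 0
  have hbi := stripEnd_le (hm := hm) h0 h1 i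
  have hbi' := stripEnd_le (hm := hm) h0 h1 i'
  have hti := t_ge_t0 (hm := hm) hmono i
  have hti' := t_ge_t0 (hm := hm) hmono i'
  have hp0 : p = 0 := by
    have c1 : (-1:ℝ) < p := by linarith [hx0.1, hx0.2, hx0'.1, hx0'.2]
    have c2 : (p:ℝ) < 1 := by linarith [hx0.1, hx0.2, hx0'.1, hx0'.2]
    have g1 : (-1:ℤ) < p := by exact_mod_cast c1
    have g2 : p < 1 := by exact_mod_cast c2
    omega
  have hq0' : q = 0 := by
    have c1 : (-1:ℝ) < q := by linarith [hx1.1, hx1.2, hx1'.1, hx1'.2]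
    have c2 : (q:ℝ) < 1 := by linarith [hx1.1, hx1.2, hx1'.1, hx1'.2]
    have g1 : (-1:ℤ) < q := by exact_mod_cast c1
    have g2 : q < 1 := by exact_mod_cast c2
    omega
  subst hp0 hq0'
  simp only [Int.cast_zero, add_zero] at hp hqq
  have hii : i = i' := by
    rcases lt_trichotomy i i' with h | h | h
    · exact absurd (stripEnd_le_t (hm := hm) hmono h) (by rw [hp] at hx0'; push_neg; linarith [hx0.2, hx0'.1])
    · exact h
    · exact absurd (stripEnd_le_t (hm := hm) hmono h) (by rw [hp] at hx0'; push_neg; linarith [hx0'.2, hx0.1])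
  refine ⟨hii, ?_⟩
  rw [hp, hqq] at hx2'
  have c1 : (z:ℝ) - 1 < z' := by linarith [hx2.1, hx2.2, hx2'.1, hx2'.2]
  have c2 : (z':ℝ) - 1 < z := by linarith [hx2.1, hx2.2, hx2'.1, hx2'.2]
  have g1 : z - 1 < z' := by exact_mod_cast c1
  have g2 : z' - 1 < z := by exact_mod_cast c2
  omega

lemma cover_core {m : ℕ} (k : ℕ) (hm : 0 < m) {t : Fin m → ℝ}
    (hmono : StrictMono t) (h0 : ∀ i, 0 ≤ t i) (h1 : ∀ i, t i < 1)
    (y : Torus 2)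
    (hy1 : y 1 ≠ 0)
    (hy2 : y 1 ≠ k • y 0 + (((1:ℝ)/2 : ℝ) : AddCircle (1:ℝ)))
    (hy3 : ∀ l, y 0 ≠ ((t l : ℝ) : AddCircle (1:ℝ))) :
    ∃ (i : Fin m) (z : ℤ),
      (⌈(k:ℝ) * t i + 1/2⌉ - 1 ≤ z ∧ z ≤ ⌈(k:ℝ) * stripEnd hm t i + 1/2⌉) ∧
      y ∈ torusQuot 2 '' stripV k (t i) (stripEnd hm t i) z := by
  classical
  obtain ⟨x₀, hx₀mem, hx₀⟩ := addCircle_exists_rep_Ico (t ⟨0, hm⟩) (y 0)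
  obtain ⟨x₁, hx₁mem, hx₁⟩ := addCircle_exists_rep_Ico 0 (y 1)
  have hx₁pos : 0 < x₁ := by
    rcases lt_or_eq_of_le hx₁mem.1 with h | h
    · exact h
    · exact absurd (by rw [← hx₁, ← h]; simp : y 1 = 0) hy1
  have hx₁lt : x₁ < 1 := by have := hx₁mem.2; linarith
  have hne : ∀ l, x₀ ≠ t l := fun l h => hy3 l (by rw [← hx₀, h])
  have hx₀gt : t ⟨0, hm⟩ < x₀ := lt_of_le_of_ne hx₀mem.1 (Ne.symm (hne ⟨0, hm⟩))
  have hx₀lt : x₀ < t ⟨0, hm⟩ + 1 := hx₀mem.2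
  set s : Finset (Fin m) := Finset.univ.filter (fun i => t i < x₀) with hs
  have hsne : s.Nonempty := ⟨⟨0, hm⟩, by simp [hs, hx₀gt]⟩
  set i := s.max' hsne with hidef
  have hti : t i < x₀ := by
    have := s.max'_mem hsne
    simp only [hs, Finset.mem_filter] at this
    exact this.2
  have hxb : x₀ < stripEnd hm t i := by
    unfold stripEnd
    split_ifs with h
    · rcases lt_or_ge x₀ (t ⟨(i : ℕ) + 1, h⟩) with hlt | hge
      · exact hlt
      · exfalso
        have hlt' : t ⟨(i : ℕ) + 1, h⟩ < x₀ :=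
          lt_of_le_of_ne hge (Ne.symm (hne ⟨(i : ℕ) + 1, h⟩))
        have hmem : (⟨(i : ℕ) + 1, h⟩ : Fin m) ∈ s := by simp [hs, hlt']
        have := Finset.le_max' s _ hmem
        rw [← hidef] at this
        simp only [Fin.le_def] at this
        omega
    · exact hx₀lt
  have hknn : (0:ℝ) ≤ k := Nat.cast_nonneg k
  have hmul1 : (k:ℝ) * t i ≤ (k:ℝ) * x₀ := mul_le_mul_of_nonneg_left (le_of_lt hti) hknn
  have hmul2 : (k:ℝ) * x₀ ≤ (k:ℝ) * stripEnd hm t i :=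
    mul_le_mul_of_nonneg_left (le_of_lt hxb) hknn
  set u : ℝ := (k:ℝ) * x₀ + 1/2 - x₁ with hu
  set z : ℤ := ⌈u⌉ with hz
  have huz1 : u ≤ (z:ℝ) := Int.le_ceil u
  have huz2 : (z:ℝ) - 1 < u := by
    have := Int.ceil_lt_add_one u
    rw [← hz] at this
    linarith
  have hune : u ≠ (z:ℝ) := by
    intro h
    apply hy2
    have hx₁eq : x₁ = (k:ℝ) * x₀ + 1/2 - z := by rw [hu] at h; linarith
    have : ((x₁ : ℝ) : AddCircle (1:ℝ)) = (((k:ℝ) * x₀ + 1/2 : ℝ) : AddCircle (1:ℝ)) :=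
      addCircle_coe_eq_coe_iff.2 ⟨z, by rw [hx₁eq]; ring⟩
    rw [← hx₀, ← hx₁, this, addCircle_nsmul_coe,
      (AddCircle.coe_add (1:ℝ) ((k:ℝ) * x₀) ((1:ℝ)/2)).symm]
  have huz3 : u < (z:ℝ) := lt_of_le_of_ne huz1 hune
  refine ⟨i, z, ⟨?_, ?_⟩, ?_⟩
  · have h1' : (k:ℝ) * t i + 1/2 - 1 ≤ u := by rw [hu]; linarith
    have := Int.ceil_le_ceil h1'
    rw [show ((k:ℝ) * t i + 1/2 - 1) = ((k:ℝ) * t i + 1/2) - ((1:ℤ):ℝ) by push_cast; ring,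
      Int.ceil_sub_intCast] at this
    omega
  · have h2' : u ≤ (k:ℝ) * stripEnd hm t i + 1/2 := by rw [hu]; linarith
    exact Int.ceil_le_ceil h2'
  · refine ⟨![x₀, x₁], ⟨⟨?_, ?_⟩, ?_⟩, ?_⟩
    · simpa using ⟨hti, hxb⟩
    · simpa using ⟨hx₁pos, hx₁lt⟩
    · simp only [Set.mem_preimage, Matrix.cons_val_one, Matrix.head_cons,
        Matrix.cons_val_zero, Set.mem_Ioo]
      constructor
      · rw [hu] at huz3; linarith
      · rw [hu] at huz2; linarith
    · funext j
      fin_cases j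
      · exact hx₀
      · exact hx₁

lemma main_torus_count (m k : ℕ) (hm : 0 < m) (t : Fin m → ℝ)
    (hmono : StrictMono t) (h0 : ∀ i, 0 ≤ t i) (h1 : ∀ i, t i < 1)
    (hgen : ∀ i, ∀ w : ℤ, (k:ℝ) * t i + 1/2 ≠ (w:ℝ)) :
    torusRegions
        ({y : Torus 2 | y 1 = 0} ∪
          {y : Torus 2 | y 1 = k • y 0 + (((1 : ℝ) / 2 : ℝ) : AddCircle (1 : ℝ))} ∪
          ⋃ i : Fin m, {y : Torus 2 | y 0 = ((t i : ℝ) : AddCircle (1 : ℝ))})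
      = 2 * m + k := by
  classical
  set A : Set (Torus 2) :=
      ({y : Torus 2 | y 1 = 0} ∪
        {y : Torus 2 | y 1 = k • y 0 + (((1 : ℝ) / 2 : ℝ) : AddCircle (1 : ℝ))} ∪
        ⋃ i : Fin m, {y : Torus 2 | y 0 = ((t i : ℝ) : AddCircle (1 : ℝ))}) with hA
  have hmem : ∀ y : Torus 2, y ∈ Aᶜ ↔
      (y 1 ≠ 0 ∧ y 1 ≠ k • y 0 + (((1:ℝ)/2 : ℝ) : AddCircle (1:ℝ)) ∧
        ∀ i, y 0 ≠ ((t i : ℝ) : AddCircle (1:ℝ))) := by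
    intro y
    simp only [hA, Set.mem_compl_iff, Set.mem_union, Set.mem_setOf_eq, Set.mem_iUnion,
      not_or, not_exists]
    tauto
  have hcont : Continuous (torusQuot 2) :=
    continuous_pi fun i => (AddCircle.continuous_mk' 1).comp (continuous_apply i)
  have hopenmap : IsOpenMap (torusQuot 2) := by
    have heq : torusQuot 2 = Pi.map
        (fun _ : Fin 2 => (QuotientAddGroup.mk : ℝ → ℝ ⧸ AddSubgroup.zmultiples (1:ℝ))) := rfl
    rw [heq]
    exact IsOpenMap.piMap (fun _ => QuotientAddGroup.isOpenMap_coe)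
      (Filter.Eventually.of_forall fun _ => QuotientAddGroup.mk_surjective)
  -- the subsets
  have hWsub : ∀ (i : Fin m) (z : ℤ),
      torusQuot 2 '' stripV k (t i) (stripEnd hm t i) z ⊆ Aᶜ := by
    rintro i z y ⟨x, hx, rfl⟩
    exact (hmem _).2 (stripV_image_mem_compl k hm hmono h0 h1 i z x hx)
  have key := card_connectedComponents_of_partition
    (X := ↥(Aᶜ))
    (ι := (i : Fin m) × {z : ℤ // z ∈ Finset.Icc (⌈(k:ℝ) * t i + 1/2⌉ - 1)
        (⌈(k:ℝ) * stripEnd hm t i + 1/2⌉)})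
    (fun p => (Subtype.val : ↥(Aᶜ) → Torus 2) ⁻¹' (torusQuot 2 '' stripV k (t p.1) (stripEnd hm t p.1) p.2.1))
    (fun p => (hopenmap _ (stripV_isOpen k _ _ _)).preimage continuous_subtype_val)
    (fun p => by
      obtain ⟨hzlo, hzhi⟩ := Finset.mem_Icc.1 p.2.2
      obtain ⟨x, hx⟩ := stripV_nonempty k (t p.1) (stripEnd hm t p.1) p.2.1
        (stripEnd_gt (hm := hm) hmono h0 h1 p.1) (hgen p.1) hzlo hzhi
      constructor
      · exact ⟨⟨torusQuot 2 x, hWsub p.1 p.2.1 ⟨x, hx, rfl⟩⟩, ⟨x, hx, rfl⟩⟩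
      · have himg : (Subtype.val : ↥(Aᶜ) → Torus 2) ''
            ((Subtype.val : ↥(Aᶜ) → Torus 2) ⁻¹' (torusQuot 2 '' stripV k (t p.1) (stripEnd hm t p.1) p.2.1))
            = torusQuot 2 '' stripV k (t p.1) (stripEnd hm t p.1) p.2.1 := by
          rw [Subtype.image_preimage_coe]
          exact Set.inter_eq_self_of_subset_right (hWsub p.1 p.2.1)
        refine Topology.IsInducing.subtypeVal.isPreconnected_image.mp ?_
        rw [himg]
        exact ((stripV_convex k _ _ _).isPreconnected).image _ hcont.continuousOn)
    (by
      rintro p q hpq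
      simp only [Function.onFun]
      rw [Set.disjoint_left]
      rintro ⟨y, hy⟩ ⟨x, hx, hxy⟩ ⟨x', hx', hxy'⟩
      apply hpq
      obtain ⟨h1', h2'⟩ := disjoint_core k hm hmono h0 h1 p.1 q.1 p.2.1 q.2.1 x x' hx hx'
        (by rw [hxy, hxy'])
      rcases p with ⟨pi, pz, hpz⟩
      rcases q with ⟨qi, qz, hqz⟩
      cases h1'
      cases h2'
      rfl)
    (by
      ext ⟨y, hy⟩
      simp only [Set.mem_iUnion, Set.mem_univ, iff_true]
      obtain ⟨hy1, hy2, hy3⟩ := (hmem y).1 hy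
      obtain ⟨i, z, ⟨hzlo, hzhi⟩, hyW⟩ := cover_core k hm hmono h0 h1 y hy1 hy2 hy3
      exact ⟨⟨i, ⟨z, Finset.mem_Icc.2 ⟨hzlo, hzhi⟩⟩⟩, hyW⟩)
  show torusRegions A = 2 * m + k
  rw [torusRegions, key, Nat.card_eq_fintype_card, Fintype.card_sigma]
  simp only [Fintype.card_coe, Int.card_Icc]
  exact strip_count k hm t hmono h0 h1

/-- in the flat torus `T²`, the `n-d+2` closed geodesics `x₂ = 0`,
`x₂ = k·x₁ + 1/2` (`k ≥ 0` an integer) and `x₁ = c_j` (`j = 1, ..., n-d`), where the `c_j`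
have distinct fractional parts and no `k·c_j + 1/2` is an integer, divide the torus into
exactly `2(n-d) + k` connected components. -/
theorem torus_geodesics_regions (n d k : ℕ) (hnd : d < n) (c : Fin (n - d) → ℝ)
    (hc : Function.Injective fun j => ((c j : ℝ) : AddCircle (1 : ℝ)))
    (hgen : ∀ j, ∀ z : ℤ, (k : ℝ) * c j + 1 / 2 ≠ (z : ℝ)) :
    torusRegions
        ({y : Torus 2 | y 1 = 0} ∪
          {y : Torus 2 | y 1 = k • y 0 + (((1 : ℝ) / 2 : ℝ) : AddCircle (1 : ℝ))} ∪
          ⋃ j : Fin (n - d), {y : Torus 2 | y 0 = (c j : AddCircle (1 : ℝ))})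
      = 2 * (n - d) + k := by
  classical
  have hm : 0 < n - d := Nat.sub_pos_of_lt hnd
  set f : Fin (n - d) → ℝ := fun j => Int.fract (c j) with hf
  have hcoe : ∀ j, ((f j : ℝ) : AddCircle (1:ℝ)) = ((c j : ℝ) : AddCircle (1:ℝ)) := by
    intro j
    rw [addCircle_coe_eq_coe_iff]
    exact ⟨⌊c j⌋, by simp only [hf, Int.fract]; ring⟩
  have hf_inj : Function.Injective f := fun j j' h => hc (by
    show ((c j : ℝ) : AddCircle (1:ℝ)) = ((c j' : ℝ) : AddCircle (1:ℝ))
    rw [← hcoe, ← hcoe, h])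
  set σ := Tuple.sort f with hσ
  set t : Fin (n - d) → ℝ := f ∘ σ with ht
  have hmono : StrictMono t :=
    (Tuple.monotone_sort f).strictMono_of_injective (hf_inj.comp σ.injective)
  have h0 : ∀ i, 0 ≤ t i := fun i => Int.fract_nonneg _
  have h1 : ∀ i, t i < 1 := fun i => Int.fract_lt_one _
  have hgen' : ∀ i, ∀ w : ℤ, (k:ℝ) * t i + 1/2 ≠ (w:ℝ) := by
    intro i w h
    apply hgen (σ i) (w + k * ⌊c (σ i)⌋)
    have hfr : t i = c (σ i) - ⌊c (σ i)⌋ := by simp only [ht, hf, Function.comp, Int.fract]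
    rw [hfr] at h
    push_cast
    ring_nf at h ⊢
    linarith
  have hUeq : (⋃ j : Fin (n - d), {y : Torus 2 | y 0 = ((c j : ℝ) : AddCircle (1:ℝ))})
      = ⋃ i : Fin (n - d), {y : Torus 2 | y 0 = ((t i : ℝ) : AddCircle (1:ℝ))} := by
    ext y
    simp only [Set.mem_iUnion, Set.mem_setOf_eq]
    constructor
    · rintro ⟨j, hj⟩
      refine ⟨σ.symm j, ?_⟩
      rw [ht]
      simp only [Function.comp_apply, Equiv.apply_symm_apply]
      rw [hcoe]
      exact hj
    · rintro ⟨i, hi⟩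
      refine ⟨σ i, ?_⟩
      rw [← hcoe]
      exact hi
  rw [hUeq]
  exact main_torus_count (n - d) k hm t hmono h0 h1 hgen'
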